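/- Let R = ℤ/4ℤ, let f be a nilpotent element of R[x], let β be the R-automorphism of R[x] defined by β(x) = -x + 1 + f, and let y = x·(-x + 1). If β has order 4 (equivalently, β∘β is not the identity), then the ring of invariants R[x]^⟨β⟩ equals R[y², 2y]. -/

import Mathlib

open Polynomial

/-! Auxiliary setup: reduction mod 2 from `ZMod 4` to `ZMod 2`. -/

def s42 : ZMod 4 →+* ZMod 2 := ZMod.castHom (show 2 ∣ 4 by norm_num) (ZMod 2)

lemma s42_surjective : Function.Surjective s42 := by decide

lemma s42_eq_zero_iff (c : ZMod 4) : s42 c = 0 ↔ c = 0 ∨ c = 2 := by revert c; decide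

lemma s42_two_mul (c : ZMod 4) : s42 c = 0 ↔ 2 * c = 0 := by revert c; decide

lemma coeff_two_mul (z : (ZMod 4)[X]) (n : ℕ) : (2 * z).coeff n = 2 * z.coeff n := by
  rw [show (2 : (ZMod 4)[X]) = C 2 from (map_ofNat C 2).symm, coeff_C_mul]

/-- `p.map s42 = 0 ↔ 2 * p = 0`. -/
lemma map_s42_eq_zero_iff (z : (ZMod 4)[X]) : z.map s42 = 0 ↔ 2 * z = 0 := by
  constructor
  · intro h
    ext n
    have := congrArg (fun p => Polynomial.coeff p n) h
    simp only [coeff_map, coeff_zero] at this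
    rw [coeff_two_mul, coeff_zero, ← s42_two_mul]
    exact this
  · intro h
    ext n
    have := congrArg (fun p => Polynomial.coeff p n) h
    simp only [coeff_zero] at this
    rw [coeff_two_mul] at this
    simp [coeff_map, (s42_two_mul (z.coeff n)).mpr this]

lemma ker_s42 : RingHom.ker s42 = Ideal.span {(2 : ZMod 4)} := by
  ext c
  rw [RingHom.mem_ker, Ideal.mem_span_singleton, dvd_def]
  revert c; decide

lemma exists_two_mul (z : (ZMod 4)[X]) (hz : z.map s42 = 0) : ∃ q, z = 2 * q := by
  have hmem : z ∈ RingHom.ker (mapRingHom s42) := by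
    rw [RingHom.mem_ker]; simpa using hz
  rw [Polynomial.ker_mapRingHom, ker_s42, Ideal.map_span, Set.image_singleton,
    Ideal.mem_span_singleton] at hmem
  obtain ⟨q, hq⟩ := hmem
  refine ⟨q, ?_⟩
  rw [hq, map_ofNat]

lemma lift_s42 (b : (ZMod 2)[X]) : ∃ a : (ZMod 4)[X], a.map s42 = b :=
  Polynomial.map_surjective s42 s42_surjective b

/-! The polynomial `w = X² + X` over `𝔽₂` and the decomposition `p = a(w) + X·b(w)`. -/

noncomputable def w2 : (ZMod 2)[X] := X ^ 2 + X

lemma w2_monic : (w2).Monic := by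
  have : w2 = X * (X + C 1) := by rw [w2]; ring_nf; simp
  rw [this]
  exact monic_X.mul (monic_X_add_C 1)

lemma w2_natDegree : w2.natDegree = 2 := by
  rw [w2]
  compute_degree!

lemma w2_degree : w2.degree = 2 := by
  rw [degree_eq_natDegree w2_monic.ne_zero, w2_natDegree]
  rfl

lemma decomp (p : (ZMod 2)[X]) : ∃ a b : (ZMod 2)[X], p = a.comp w2 + X * b.comp w2 := by
  generalize hd : p.natDegree = n
  induction n using Nat.strong_induction_on generalizing p with
  | _ n ih =>
    by_cases h1 : p.natDegree ≤ 1
    · refine ⟨C (p.coeff 0), C (p.coeff 1), ?_⟩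
      conv_lhs => rw [eq_X_add_C_of_natDegree_le_one h1]
      simp [C_comp]
      ring
    · have hp0 : p ≠ 0 := fun hc => by simp [hc] at h1
      have hq0 : 2 ≤ n := by omega
      have hdeg : (p /ₘ w2).natDegree < n := by
        rcases eq_or_ne (p /ₘ w2) 0 with h0 | h0
        · rw [h0, natDegree_zero]; omega
        · have := degree_divByMonic_lt p w2 hp0 (by rw [w2_degree]; norm_num)
          rw [← hd]
          exact natDegree_lt_natDegree h0 this
      obtain ⟨a', b', hab⟩ := ih _ hdeg (p /ₘ w2) rfl
      have hr : (p %ₘ w2).natDegree ≤ 1 := by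
        have := degree_modByMonic_lt p w2_monic
        rw [w2_degree] at this
        rcases eq_or_ne (p %ₘ w2) 0 with h0 | h0
        · simp [h0]
        · have hlt : (p %ₘ w2).natDegree < 2 :=
            (natDegree_lt_iff_degree_lt h0).mpr (by exact_mod_cast this)
          omega
      refine ⟨X * a' + C ((p %ₘ w2).coeff 0), X * b' + C ((p %ₘ w2).coeff 1), ?_⟩
      conv_lhs => rw [← modByMonic_add_div p w2, hab]
      conv_lhs => rw [show p %ₘ w2 = C ((p %ₘ w2).coeff 1) * X + C ((p %ₘ w2).coeff 0) from
        eq_X_add_C_of_natDegree_le_one hr]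
      simp only [add_comp, mul_comp, X_comp, C_comp]
      ring

lemma comp_w2_eq_zero {a : (ZMod 2)[X]} (h : a.comp w2 = 0) : a = 0 := by
  rcases (comp_eq_zero_iff).mp h with h' | ⟨h1, h2⟩
  · exact h'
  · exfalso
    have := congrArg natDegree h2
    rw [w2_natDegree, natDegree_C] at this
    omega

lemma unique0 {a b : (ZMod 2)[X]} (h : a.comp w2 + X * b.comp w2 = 0) : a = 0 ∧ b = 0 := by
  have hb : b = 0 := by
    by_contra hb
    have hbw : b.comp w2 ≠ 0 := fun hc => hb (comp_w2_eq_zero hc)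
    have ha : a ≠ 0 := by
      rintro rfl
      simp only [zero_comp, zero_add, mul_eq_zero, X_ne_zero, false_or] at h
      exact hbw h
    have haw : a.comp w2 ≠ 0 := fun hc => ha (comp_w2_eq_zero hc)
    have heq : a.comp w2 = -(X * b.comp w2) := by linear_combination h
    have hdeg := congrArg natDegree heq
    rw [natDegree_neg, natDegree_comp, natDegree_mul X_ne_zero hbw, natDegree_X,
      natDegree_comp, w2_natDegree] at hdeg
    omega
  subst hb
  simp only [zero_comp, mul_zero, add_zero] at h
  exact ⟨comp_w2_eq_zero h, rfl⟩

lemma two_B : (2 : (ZMod 2)[X]) = 0 := by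
  rw [show (2 : (ZMod 2)[X]) = C 2 from (map_ofNat C 2).symm,
    show (2 : ZMod 2) = 0 from rfl, map_zero]

lemma w2_comp_X1 : w2.comp (X + 1) = w2 := by
  rw [w2]
  simp [add_comp, pow_comp, X_comp, one_comp]
  linear_combination (X + 1) * (two_B)

lemma tau_eq (a b : (ZMod 2)[X]) :
    (a.comp w2 + X * b.comp w2).comp (X + 1) = a.comp w2 + (X + 1) * b.comp w2 := by
  rw [add_comp, mul_comp, X_comp, comp_assoc, comp_assoc, w2_comp_X1]

/-- Theorem: over `R = ℤ/4ℤ`, if `f` is nilpotent, `β(x) = -x + 1 + f` and `β` has order 4,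
then the ring of invariants of `⟨β⟩` is `R[y², 2y]` where `y = x·(-x+1)`. -/
theorem zmod4_beta_f_order_four_invariants (f : (ZMod 4)[X]) (hf : IsNilpotent f)
    (β : (ZMod 4)[X] ≃ₐ[ZMod 4] (ZMod 4)[X]) (hβ : β X = -X + 1 + f)
    (hord : orderOf β = 4) :
    {g : (ZMod 4)[X] | ∀ σ ∈ Subgroup.zpowers β, σ g = g} =
      (Algebra.adjoin (ZMod 4)
        ({(X * (-X + 1)) ^ 2, 2 * (X * (-X + 1))} : Set ((ZMod 4)[X])) : Set ((ZMod 4)[X])) := by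
  set y : (ZMod 4)[X] := X * (-X + 1) with hy
  have hcomp : ∀ p : (ZMod 4)[X], β p = p.comp (β X) := by
    intro p
    have hext := Polynomial.algHom_ext (f := β.toAlgHom) (g := aeval (β X)) (by simp)
    calc β p = β.toAlgHom p := rfl
    _ = aeval (β X) p := by rw [hext]
    _ = p.comp (β X) := by simp [aeval_def, comp, Polynomial.algebraMap_eq]
  have hf0 : f.map s42 = 0 := by
    have hnil : IsNilpotent (f.map s42) := by
      simpa using hf.map (mapRingHom s42)
    exact hnil.eq_zero
  have h2f : 2 * f = 0 := (map_s42_eq_zero_iff f).mp hf0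
  obtain ⟨h, hfh⟩ := exists_two_mul f hf0
  have h4 : (4 : (ZMod 4)[X]) = 0 := by
    rw [show (4 : (ZMod 4)[X]) = C 4 from (map_ofNat C 4).symm,
      show (4 : ZMod 4) = 0 from rfl, map_zero]
  have hff : f * f = 0 := by rw [hfh]; linear_combination h * h * h4
  have hβy : β y = y + f := by
    rw [hy, map_mul, map_add, map_neg, map_one, hβ]
    linear_combination (X - 1) * h2f - hff
  have hy2fix : β (y ^ 2) = y ^ 2 := by
    rw [map_pow, hβy]
    linear_combination y * h2f + hff
  have h2yfix : β (2 * y) = 2 * y := by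
    rw [map_mul, hβy, map_ofNat]
    linear_combination h2f
  -- membership in adjoin implies fixed by β
  have hSfix : ∀ g ∈ Algebra.adjoin (ZMod 4) ({y ^ 2, 2 * y} : Set ((ZMod 4)[X])), β g = g := by
    intro g hg
    have hle : Algebra.adjoin (ZMod 4) ({y ^ 2, 2 * y} : Set ((ZMod 4)[X])) ≤
        AlgHom.equalizer β.toAlgHom (AlgHom.id (ZMod 4) ((ZMod 4)[X])) := by
      rw [Algebra.adjoin_le_iff]
      intro z hz
      rcases hz with rfl | hz
      · exact hy2fix
      · rw [Set.mem_singleton_iff] at hz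
        subst hz
        exact h2yfix
    exact hle hg
  -- fixed by β implies fixed by every power
  have hpow : ∀ g : (ZMod 4)[X], β g = g → ∀ σ ∈ Subgroup.zpowers β, σ g = g := by
    intro g hgfix σ hσ
    obtain ⟨k, rfl⟩ := hσ
    have hnat : ∀ n : ℕ, (β ^ n) g = g := by
      intro n
      induction n with
      | zero => rfl
      | succ n ihn =>
        rw [pow_succ, AlgEquiv.mul_apply, hgfix, ihn]
    rcases k with n | n
    · show (β ^ (n : ℤ)) g = g
      rw [zpow_natCast]
      exact hnat n
    · show (β ^ (Int.negSucc n)) g = g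
      rw [zpow_negSucc]
      have h1 : (β ^ (n + 1)) g = g := hnat (n + 1)
      calc (β ^ (n + 1))⁻¹ g = (β ^ (n + 1))⁻¹ ((β ^ (n + 1)) g) := by rw [h1]
      _ = ((β ^ (n + 1))⁻¹ * β ^ (n + 1)) g := by rw [AlgEquiv.mul_apply]
      _ = g := by rw [inv_mul_cancel]; rfl
  -- mod 2 facts
  have hβX2 : (β X).map s42 = X + 1 := by
    rw [hβ]
    simp only [Polynomial.map_add, Polynomial.map_neg, Polynomial.map_one, Polynomial.map_X, hf0]
    linear_combination -X * two_B
  have hmapβ : ∀ p : (ZMod 4)[X], (β p).map s42 = (p.map s42).comp (X + 1) := by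
    intro p
    rw [hcomp, Polynomial.map_comp, hβX2]
  have hy2 : y.map s42 = w2 := by
    rw [hy, w2]
    simp only [Polynomial.map_mul, Polynomial.map_add, Polynomial.map_neg, Polynomial.map_one,
      Polynomial.map_X]
    linear_combination -X ^ 2 * two_B
  ext g
  simp only [Set.mem_setOf_eq, SetLike.mem_coe]
  constructor
  · intro hg
    have hgfix : β g = g := hg β (Subgroup.mem_zpowers β)
    obtain ⟨a, b, hab⟩ := decomp (g.map s42)
    have htau : (g.map s42).comp (X + 1) = g.map s42 := by rw [← hmapβ, hgfix]
    have hb0 : b = 0 := by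
      have hbw : b.comp w2 = 0 := by
        have h5 := htau
        rw [hab, tau_eq] at h5
        linear_combination h5
      exact (unique0 (a := b) (b := 0) (by simp [hbw])).1
    obtain ⟨Q, hQ⟩ := lift_s42 a
    have hgQmap : (g - Q.comp y).map s42 = 0 := by
      rw [Polynomial.map_sub, Polynomial.map_comp, hQ, hy2, hab, hb0]
      simp
    obtain ⟨q, hq⟩ := exists_two_mul _ hgQmap
    have hgQy : g = Q.comp y + 2 * q := by linear_combination hq
    obtain ⟨k, hk⟩ := Polynomial.binomExpansion (Q.map C) y f
    have hQcomp : Q.comp (y + f) = Q.comp y + (derivative Q).comp y * f + k * f ^ 2 := by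
      have e1 : ∀ u : (ZMod 4)[X], Q.comp u = (Q.map C).eval u := fun u => by
        rw [comp, eval₂_eq_eval_map]
      have e2 : (derivative Q).comp y = (Q.map C).derivative.eval y := by
        rw [comp, eval₂_eq_eval_map, derivative_map]
      rw [e1, e1, e2]
      exact hk
    have hE : (derivative Q).comp y * f + (2 * β q - 2 * q) = 0 := by
      have hβQy : β (Q.comp y) = Q.comp (y + f) := by
        rw [hcomp (Q.comp y), comp_assoc, ← hcomp y, hβy]
      have h8 : β g = Q.comp (y + f) + 2 * β q := by
        calc β g = β (Q.comp y + 2 * q) := by rw [← hgQy]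
        _ = β (Q.comp y) + 2 * β q := by rw [map_add, map_mul, map_ofNat]
        _ = Q.comp (y + f) + 2 * β q := by rw [hβQy]
      have h9 := hgfix
      rw [h8, hQcomp] at h9
      conv_rhs at h9 => rw [hgQy]
      linear_combination h9 - k * hff
    have hM : ((derivative Q).comp y * h + (β q - q)).map s42 = 0 := by
      apply (map_s42_eq_zero_iff _).mpr
      linear_combination hE - (derivative Q).comp y * hfh
    obtain ⟨ah, bh, habh⟩ := decomp (h.map s42)
    obtain ⟨aq, bq, habq⟩ := decomp (q.map s42)
    have hM2 : (derivative (Q.map s42)).comp w2 * (h.map s42) +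
        ((q.map s42).comp (X + 1) - q.map s42) = 0 := by
      have h10 := hM
      rw [Polynomial.map_add, Polynomial.map_sub, Polynomial.map_mul, Polynomial.map_comp,
        hy2, hmapβ q] at h10
      rw [derivative_map]
      exact h10
    set D : (ZMod 2)[X] := derivative (Q.map s42) with hD
    have hkey : (ah * D + bq).comp w2 + X * ((bh * D).comp w2) = 0 := by
      have h5 : (q.map s42).comp (X + 1) - q.map s42 = bq.comp w2 := by
        rw [habq, tau_eq]
        ring
      rw [h5, habh] at hM2
      calc (ah * D + bq).comp w2 + X * ((bh * D).comp w2)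
          = D.comp w2 * (ah.comp w2 + X * bh.comp w2) + bq.comp w2 := by
            simp only [add_comp, mul_comp]
            ring
      _ = 0 := hM2
    obtain ⟨h6, h7⟩ := unique0 hkey
    have hbh : bh ≠ 0 := by
      intro hbh0
      have hhfix : (h.map s42).comp (X + 1) = h.map s42 := by
        rw [habh, hbh0, tau_eq]
        simp
      have hβ2X : β (β X) = X := by
        have h11 : (h.comp (β X) - h).map s42 = 0 := by
          rw [Polynomial.map_sub, Polynomial.map_comp, hβX2, hhfix, sub_self]
        have h12 : 2 * (h.comp (β X) - h) = 0 := (map_s42_eq_zero_iff _).mp h11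
        rw [hβ] at h12
        rw [hcomp (β X), hβ]
        simp only [add_comp, neg_comp, X_comp, one_comp]
        rw [hfh] at h12 ⊢
        simp only [mul_comp, ofNat_comp] at h12 ⊢
        linear_combination h12
      have hβ2 : β ^ 2 = 1 := by
        apply AlgEquiv.ext
        intro p
        show (β ^ 2) p = p
        rw [pow_two, AlgEquiv.mul_apply, hcomp p, hcomp (p.comp (β X)), comp_assoc,
          ← hcomp (β X), hβ2X, comp_X]
      have hdvd := orderOf_dvd_of_pow_eq_one hβ2
      rw [hord] at hdvd
      omega
    have hD0 : D = 0 := by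
      rcases mul_eq_zero.mp h7 with h' | h'
      · exact absurd h' hbh
      · exact h'
    have hbq0 : bq = 0 := by
      rw [hD0, mul_zero, zero_add] at h6
      exact h6
    have hodd : ∀ m : ℕ, Odd m → s42 (Q.coeff m) = 0 := by
      intro m hm
      obtain ⟨t, ht⟩ := hm
      have h13 := coeff_derivative (Q.map s42) (2 * t)
      rw [← hD, hD0, coeff_zero] at h13
      have hone : ((2 * t : ℕ) : ZMod 2) + 1 = 1 := by
        push_cast
        rw [show (2 : ZMod 2) = 0 from rfl]
        ring
      rw [hone, mul_one] at h13
      rw [ht, ← coeff_map]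
      exact h13.symm
    -- assemble membership
    have hSgen1 : y ^ 2 ∈ Algebra.adjoin (ZMod 4) ({y ^ 2, 2 * y} : Set ((ZMod 4)[X])) :=
      Algebra.subset_adjoin (Set.mem_insert _ _)
    have hSgen2 : 2 * y ∈ Algebra.adjoin (ZMod 4) ({y ^ 2, 2 * y} : Set ((ZMod 4)[X])) :=
      Algebra.subset_adjoin (by simp)
    set S := Algebra.adjoin (ZMod 4) ({y ^ 2, 2 * y} : Set ((ZMod 4)[X])) with hS
    have h2S : (2 : (ZMod 4)[X]) ∈ S := by
      have := Subalgebra.natCast_mem S 2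
      simpa using this
    have hpowmem : ∀ m : ℕ, y ^ (2 * m) ∈ S := by
      intro m
      rw [pow_mul]
      exact pow_mem hSgen1 m
    have h2powmem : ∀ n : ℕ, (2 : (ZMod 4)[X]) * y ^ n ∈ S := by
      intro n
      rcases Nat.even_or_odd n with ⟨m, hm⟩ | ⟨m, hm⟩
      · rw [hm, ← two_mul]
        exact mul_mem h2S (hpowmem m)
      · have he : (2 : (ZMod 4)[X]) * y ^ n = (2 * y) * (y ^ 2) ^ m := by
          rw [hm, ← pow_mul]
          ring
        rw [he]
        exact mul_mem hSgen2 (pow_mem hSgen1 m)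
    have hterm : ∀ (n : ℕ) (c : ZMod 4), (Odd n → s42 c = 0) → C c * y ^ n ∈ S := by
      intro n c hc
      rcases Nat.even_or_odd n with ⟨m, hm⟩ | ho
      · have := S.smul_mem (show y ^ n ∈ S by rw [hm, ← two_mul]; exact hpowmem m) c
        rwa [smul_eq_C_mul] at this
      · rcases (s42_eq_zero_iff c).mp (hc ho) with rfl | rfl
        · simp only [map_zero, zero_mul]
          exact zero_mem S
        · rw [show (C (2 : ZMod 4) : (ZMod 4)[X]) = 2 from map_ofNat C 2]
          exact h2powmem n
    have hQmem : Q.comp y ∈ S := by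
      rw [comp, eval₂_eq_sum, Polynomial.sum_def]
      exact S.sum_mem fun n _ => hterm n _ (fun ho => hodd n ho)
    obtain ⟨Aq, hAq⟩ := lift_s42 aq
    have hqA : (q - Aq.comp y).map s42 = 0 := by
      rw [Polynomial.map_sub, Polynomial.map_comp, hAq, hy2, habq, hbq0]
      simp
    obtain ⟨r, hr⟩ := exists_two_mul _ hqA
    have h2q : 2 * q = 2 * (Aq.comp y) := by linear_combination 2 * hr + r * h4
    have h2A : 2 * (Aq.comp y) ∈ S := by
      rw [comp, eval₂_eq_sum, Polynomial.sum_def, Finset.mul_sum]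
      apply S.sum_mem
      intro n _
      have he : (2 : (ZMod 4)[X]) * (C (Aq.coeff n) * y ^ n) = C (Aq.coeff n) * (2 * y ^ n) := by
        ring
      rw [he]
      refine mul_mem ?_ (h2powmem n)
      have := S.algebraMap_mem (Aq.coeff n)
      rwa [Polynomial.algebraMap_eq] at this
    rw [hgQy, h2q]
    exact add_mem hQmem h2A
  · intro hg
    exact hpow g (hSfix g hg)
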